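/- (Termination bound for the multiplicative-weights boosting process.) Let L ≥ 2 be an integer, X a finite set, μ a probability distribution on X, g* : X → Δ_L, and ε ∈ (0,1). Suppose h_0, h_1, …, h_K : X → ℝ^L satisfy: h_0(x) = 0 for all x ∈ X, and for each k < K there is a function f_k : X → ℝ^L with ‖f_k(x)‖∞ ≤ 1 for all x, such that h_{k+1} = h_k − ε f_k and ⟨softmax∘h_k − g*, f_k⟩_μ > ε. Then K < 2 ln L / ε². -/

import Mathlib

open Real Finset

lemma hoeffding_fin {L : ℕ} (p f : Fin L → ℝ) (hp0 : ∀ y, 0 ≤ p y) (hp1 : ∑ y, p y = 1)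
    (hf : ∀ y, |f y| ≤ 1) (t : ℝ) :
    Real.log (∑ y, p y * Real.exp (t * f y)) ≤ t * (∑ y, p y * f y) + t ^ 2 / 2 := by
  set S0 : ℝ → ℝ := fun t => ∑ y, p y * Real.exp (t * f y) with hS0
  set S1 : ℝ → ℝ := fun t => ∑ y, p y * f y * Real.exp (t * f y) with hS1
  set S2 : ℝ → ℝ := fun t => ∑ y, p y * f y ^ 2 * Real.exp (t * f y) with hS2
  have hpos : ∀ s : ℝ, 0 < S0 s := by
    intro s
    apply Finset.sum_pos'
    · intro y _; exact mul_nonneg (hp0 y) (Real.exp_pos _).le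
    · by_contra hc
      push_neg at hc
      have : ∀ y, p y = 0 := by
        intro y
        have h1 := hc y (Finset.mem_univ y)
        nlinarith [hp0 y, Real.exp_pos (s * f y)]
      simp [this] at hp1
  have hdS0 : ∀ s : ℝ, HasDerivAt S0 (S1 s) s := by
    intro s
    have hd : HasDerivAt S0 (∑ y : Fin L, p y * (Real.exp (s * f y) * f y)) s := by
      apply HasDerivAt.fun_sum
      intro y _
      exact ((hasDerivAt_mul_const (f y)).exp).const_mul (p y)
    convert hd using 1
    apply Finset.sum_congr rfl; intro y _; ring
  have hdS1 : ∀ s : ℝ, HasDerivAt S1 (S2 s) s := by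
    intro s
    have hd : HasDerivAt S1 (∑ y : Fin L, p y * f y * (Real.exp (s * f y) * f y)) s := by
      apply HasDerivAt.fun_sum
      intro y _
      exact ((hasDerivAt_mul_const (f y)).exp).const_mul (p y * f y)
    convert hd using 1
    apply Finset.sum_congr rfl; intro y _; ring
  have hS2le : ∀ s : ℝ, S2 s ≤ S0 s := by
    intro s
    apply Finset.sum_le_sum
    intro y _
    have h1 : f y ^ 2 ≤ 1 := by
      have := hf y
      nlinarith [abs_nonneg (f y), sq_abs (f y)]
    have := Real.exp_pos (s * f y)
    nlinarith [hp0 y, mul_nonneg (hp0 y) (Real.exp_pos (s * f y)).le]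
  -- N s = s - S1 s / S0 s is monotone
  set N : ℝ → ℝ := fun s => s - S1 s / S0 s with hN
  have hdN : ∀ s : ℝ, HasDerivAt N (1 - (S2 s * S0 s - S1 s * S1 s) / S0 s ^ 2) s := by
    intro s
    exact (hasDerivAt_id s).sub ((hdS1 s).div (hdS0 s) (hpos s).ne')
  have hNmono : Monotone N := by
    apply monotone_of_deriv_nonneg
    · intro s; exact (hdN s).differentiableAt
    · intro s
      rw [(hdN s).deriv]
      have h0 := hpos s
      have h2 := hS2le s
      rw [sub_nonneg, div_le_one (by positivity)]
      nlinarith [sq_nonneg (S1 s)]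
  set m : ℝ := ∑ y, p y * f y with hm
  have hS00 : S0 0 = 1 := by simp [hS0, hp1]
  have hS10 : S1 0 = m := by simp [hS1, hm]
  have hN0 : N 0 = -m := by simp [hN, hS00, hS10]
  -- G s = s*m + s^2/2 - log (S0 s)
  set G : ℝ → ℝ := fun s => s * m + s ^ 2 / 2 - Real.log (S0 s) with hG
  have hdG : ∀ s : ℝ, HasDerivAt G (m + s - S1 s / S0 s) s := by
    intro s
    have h1 : HasDerivAt (fun s : ℝ => s * m + s ^ 2 / 2) (m + s) s := by
      have := ((hasDerivAt_mul_const m).add (((hasDerivAt_pow 2 s)).div_const 2))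
      refine HasDerivAt.congr_deriv this ?_
      norm_num
    have h2 : HasDerivAt (fun s => Real.log (S0 s)) (S1 s / S0 s) s :=
      (hdS0 s).log (hpos s).ne'
    exact h1.sub h2
  have hG0 : G 0 = 0 := by simp [hG, hS00]
  have key : 0 ≤ G t := by
    rcases le_total 0 t with ht | ht
    · have : MonotoneOn G (Set.Ici 0) := by
        apply monotoneOn_of_deriv_nonneg (convex_Ici 0)
        · exact Continuous.continuousOn
            (Differentiable.continuous (fun s => (hdG s).differentiableAt))
        · intro s _; exact (hdG s).differentiableAt.differentiableWithinAt
        · intro s hs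
          rw [interior_Ici] at hs
          rw [(hdG s).deriv]
          have : N 0 ≤ N s := hNmono (le_of_lt hs)
          rw [hN0] at this
          simp only [hN] at this
          linarith
      have := this (Set.self_mem_Ici) (Set.mem_Ici.mpr ht) ht
      rw [hG0] at this; exact this
    · have : AntitoneOn G (Set.Iic 0) := by
        apply antitoneOn_of_deriv_nonpos (convex_Iic 0)
        · exact Continuous.continuousOn
            (Differentiable.continuous (fun s => (hdG s).differentiableAt))
        · intro s _; exact (hdG s).differentiableAt.differentiableWithinAt
        · intro s hs
          rw [interior_Iic] at hs
          rw [(hdG s).deriv]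
          have : N s ≤ N 0 := hNmono (le_of_lt hs)
          rw [hN0] at this
          simp only [hN] at this
          linarith
      have := this (Set.mem_Iic.mpr ht) (Set.self_mem_Iic) ht
      rw [hG0] at this; exact this
  have : Real.log (S0 t) ≤ t * m + t ^ 2 / 2 := by
    simp only [hG] at key; linarith
  exact this

noncomputable section

/-- Standard inner product on `ℝ^L`. -/
def dot {L : ℕ} (g h : Fin L → ℝ) : ℝ := ∑ y, g y * h y

/-- The probability simplex `Δ_L ⊆ ℝ^L`. -/
def simplex (L : ℕ) : Set (Fin L → ℝ) :=
  {v | (∀ y, 0 ≤ v y) ∧ ∑ y, v y = 1}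

/-- Softmax function `softmax(h)_y = e^{h_y} / ∑_z e^{h_z}`. -/
def softmax {L : ℕ} (h : Fin L → ℝ) : Fin L → ℝ :=
  fun y => Real.exp (h y) / ∑ z, Real.exp (h z)

/-- `⟨g,h⟩_μ = E_{x∼μ}[⟨g(x),h(x)⟩]`. -/
def innerMu {X : Type*} [Fintype X] {L : ℕ} (μ : X → ℝ)
    (g h : X → Fin L → ℝ) : ℝ := ∑ x, μ x * dot (g x) (h x)

/-- Termination bound for the multiplicative-weights boosting process: starting from
`h_0 = 0`, if each step uses an update direction `f_k` bounded in `ℓ∞` by 1 with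
correlation `⟨softmax∘h_k - g*, f_k⟩_μ > ε` and sets `h_{k+1} = h_k - ε f_k`, then
the number of steps satisfies `K < 2 ln L / ε²`. -/
theorem mw_termination {X : Type*} [Fintype X] {L : ℕ} (hL : 2 ≤ L)
    (μ : X → ℝ) (hμ0 : ∀ x, 0 ≤ μ x) (hμ1 : ∑ x, μ x = 1)
    (gs : X → Fin L → ℝ) (hgs : ∀ x, gs x ∈ simplex L)
    (ε : ℝ) (hε0 : 0 < ε) (hε1 : ε < 1)
    (K : ℕ) (h f : ℕ → X → Fin L → ℝ)
    (h0 : ∀ x, h 0 x = 0)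
    (hstep : ∀ k < K, (∀ x y, |f k x y| ≤ 1) ∧
      (h (k + 1) = fun x => h k x - ε • f k x) ∧
      innerMu μ (fun x => softmax (h k x) - gs x) (f k) > ε) :
    (K : ℝ) < 2 * Real.log L / ε ^ 2 := by
  have hLpos : 0 < L := by omega
  have hZpos : ∀ v : Fin L → ℝ, 0 < ∑ y, Real.exp (v y) := by
    intro v
    apply Finset.sum_pos (fun y _ => Real.exp_pos (v y))
    exact ⟨⟨0, hLpos⟩, Finset.mem_univ _⟩
  have dot_sub : ∀ (a b c : Fin L → ℝ), dot (a - b) c = dot a c - dot b c := by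
    intro a b c
    simp [dot, sub_mul, Finset.sum_sub_distrib]
  set Φ : ℕ → ℝ := fun k =>
    ∑ x, μ x * (Real.log (∑ y, Real.exp (h k x y)) - dot (gs x) (h k x)) with hΦ
  -- step bound
  have step : ∀ k, k < K → Φ (k + 1) < Φ k - ε ^ 2 / 2 := by
    intro k hk
    obtain ⟨hfb, hrec, hcorr⟩ := hstep k hk
    -- pointwise bound
    have hx : ∀ x, Real.log (∑ y, Real.exp (h (k+1) x y)) - dot (gs x) (h (k+1) x)
        ≤ Real.log (∑ y, Real.exp (h k x y)) - dot (gs x) (h k x)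
          - ε * dot (softmax (h k x) - gs x) (f k x) + ε ^ 2 / 2 := by
      intro x
      set v := h k x with hv
      set Z := ∑ y, Real.exp (v y) with hZ
      have hZ0 : 0 < Z := hZpos v
      set p := softmax v with hp
      have hp0 : ∀ y, 0 ≤ p y := fun y => div_nonneg (Real.exp_pos _).le hZ0.le
      have hp1 : ∑ y, p y = 1 := by
        rw [hp]
        simp only [softmax]
        rw [← Finset.sum_div, div_self hZ0.ne']
      have hnew : ∀ y, h (k+1) x y = v y + (-ε * f k x y) := by
        intro y
        rw [hrec]
        simp [hv]
        ring
      have hsum : ∑ y, p y * Real.exp (-ε * f k x y)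
          = (∑ y, Real.exp (h (k+1) x y)) / Z := by
        rw [Finset.sum_div]
        apply Finset.sum_congr rfl
        intro y _
        rw [hnew y, Real.exp_add, hp]
        simp only [softmax, ← hZ]
        ring
      have hhoef := hoeffding_fin p (f k x) hp0 hp1 (fun y => hfb x y) (-ε)
      rw [hsum, Real.log_div (hZpos _).ne' hZ0.ne'] at hhoef
      have hdotp : (∑ y, p y * f k x y) = dot p (f k x) := rfl
      rw [hdotp] at hhoef
      have hgd : dot (gs x) (h (k+1) x) = dot (gs x) v - ε * dot (gs x) (f k x) := by
        simp only [dot, Finset.mul_sum, ← Finset.sum_sub_distrib]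
        apply Finset.sum_congr rfl
        intro y _
        rw [hnew y]
        ring
      have hds : dot (softmax v - gs x) (f k x) = dot p (f k x) - dot (gs x) (f k x) := by
        rw [dot_sub, hp]
      rw [hgd, hds]
      nlinarith [hhoef]
    -- sum over x
    have h1 : Φ (k + 1) ≤ Φ k - ε * innerMu μ (fun x => softmax (h k x) - gs x) (f k)
        + ε ^ 2 / 2 := by
      have h2 : Φ (k + 1) ≤ ∑ x, μ x *
          (Real.log (∑ y, Real.exp (h k x y)) - dot (gs x) (h k x)
            - ε * dot (softmax (h k x) - gs x) (f k x) + ε ^ 2 / 2) := by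
        apply Finset.sum_le_sum
        intro x _
        exact mul_le_mul_of_nonneg_left (hx x) (hμ0 x)
      refine h2.trans_eq ?_
      rw [hΦ, innerMu]
      simp only [mul_add, mul_sub]
      rw [Finset.sum_add_distrib, Finset.sum_sub_distrib]
      rw [← Finset.sum_mul, hμ1, one_mul, Finset.mul_sum]
      congr 1
      congr 1
      apply Finset.sum_congr rfl
      intro x _
      ring
    nlinarith [h1, hcorr, hε0]
  -- Φ 0 = log L
  have hΦ0 : Φ 0 = Real.log L := by
    show (∑ x, μ x * (Real.log (∑ y, Real.exp (h 0 x y)) - dot (gs x) (h 0 x))) = Real.log L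
    have : ∀ x : X, μ x * (Real.log (∑ y, Real.exp (h 0 x y)) - dot (gs x) (h 0 x))
        = μ x * Real.log L := by
      intro x
      rw [h0 x]
      simp [dot, Finset.card_univ]
    rw [Finset.sum_congr rfl (fun x _ => this x), ← Finset.sum_mul, hμ1, one_mul]
  -- Φ K ≥ 0
  have hΦK : 0 ≤ Φ K := by
    apply Finset.sum_nonneg
    intro x _
    apply mul_nonneg (hμ0 x)
    rw [sub_nonneg]
    obtain ⟨hg0, hg1⟩ := hgs x
    calc dot (gs x) (h K x) ≤ ∑ y, gs x y * Real.log (∑ z, Real.exp (h K x z)) := by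
          apply Finset.sum_le_sum
          intro y _
          apply mul_le_mul_of_nonneg_left _ (hg0 y)
          have h1 : Real.exp (h K x y) ≤ ∑ z, Real.exp (h K x z) :=
            Finset.single_le_sum (fun z _ => (Real.exp_pos _).le) (Finset.mem_univ y)
          calc h K x y = Real.log (Real.exp (h K x y)) := (Real.log_exp _).symm
            _ ≤ Real.log (∑ z, Real.exp (h K x z)) :=
              Real.log_le_log (Real.exp_pos _) h1
      _ = Real.log (∑ z, Real.exp (h K x z)) := by
          rw [← Finset.sum_mul, hg1, one_mul]
  -- chain
  have hchain : ∀ k, k ≤ K → Φ k ≤ Φ 0 - k * (ε ^ 2 / 2) := by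
    intro k
    induction k with
    | zero => intro _; simp
    | succ n ih =>
      intro hn
      have h1 : Φ (n + 1) < Φ n - ε ^ 2 / 2 := step n (by omega)
      have h2 := ih (by omega)
      push_cast
      linarith
  have hlogL : 0 < Real.log L := by
    apply Real.log_pos
    exact_mod_cast by omega
  rcases Nat.eq_zero_or_pos K with hK0 | hKpos
  · rw [hK0]
    push_cast
    positivity
  · obtain ⟨K', rfl⟩ : ∃ K', K = K' + 1 := ⟨K - 1, by omega⟩
    have h1 : Φ (K' + 1) < Φ K' - ε ^ 2 / 2 := step K' (by omega)
    have h2 := hchain K' (by omega)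
    have h3 : (K' + 1 : ℝ) * (ε ^ 2 / 2) < Real.log L := by
      push_cast
      rw [hΦ0] at h2
      nlinarith
    rw [lt_div_iff₀ (by positivity)]
    push_cast at h3 ⊢
    nlinarith
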